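/- Weak Pareto-ranking at an optimum: Suppose (σ, μ) is a solution to the sender's problem (P) (i.e., (σ, μ) is obedient and U_s(σ, μ, τ*) attains the supremum of U_s over all obedient ambiguous experiments) and φ_r is strictly concave. Then for all θ, θ' in the support of μ such that u_s(σ_θ, τ*) ≥ U_s(σ, μ, τ*) ≥ u_s(σ_{θ'}, τ*) with at least one of these inequalities strict, the experiments σ_θ and σ_{θ'} are weakly Pareto-ranked. -/

import Mathlib

open Finset

/-- A stochastic kernel from `X` to `Y`: each row `k x` is a probability vector on `Y`.
An experiment is a kernel from states `Ω` to messages; a receiver strategy is a kernel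
from messages to actions `A`. -/
def IsKernel {X Y : Type*} [Fintype Y] (k : X → Y → ℝ) : Prop :=
  (∀ x y, 0 ≤ k x y) ∧ ∀ x, ∑ y, k x y = 1

/-- A probability vector on a finite type. -/
def IsProb {Θ : Type*} [Fintype Θ] (μ : Θ → ℝ) : Prop :=
  (∀ θ, 0 ≤ μ θ) ∧ ∑ θ, μ θ = 1

/-- The obedient strategy `τ*`: take the recommended action with probability one. -/
noncomputable def tauStar {A : Type*} [DecidableEq A] : A → A → ℝ :=
  fun m a => if a = m then (1 : ℝ) else 0

/-- Expected payoff `u_i(σ, τ) = ∑_{ω,m,a} p(ω) σ(m|ω) τ(a|m) u_i(a,ω)`. -/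
noncomputable def expPayoff {Ω M A : Type*} [Fintype Ω] [Fintype M] [Fintype A]
    (p : Ω → ℝ) (u : A → Ω → ℝ) (σ : Ω → M → ℝ) (τ : M → A → ℝ) : ℝ :=
  ∑ ω, ∑ m, ∑ a, p ω * σ ω m * τ m a * u a ω

/-- Obedience of a single (unambiguous) canonical experiment: `τ*` is a best reply. -/
def Obedient {Ω A : Type*} [Fintype Ω] [Fintype A] [DecidableEq A]
    (p : Ω → ℝ) (ur : A → Ω → ℝ) (σ : Ω → A → ℝ) : Prop :=
  ∀ τ : A → A → ℝ, IsKernel τ → expPayoff p ur σ τ ≤ expPayoff p ur σ tauStar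

/-- Obedience of an ambiguous experiment `(σ, μ)` for a smooth-ambiguity receiver with
index `φr`:  `τ*` maximizes `τ ↦ U_r(σ, μ, τ) = φr⁻¹(∑_θ μ_θ φr(u_r(σ_θ, τ)))`; since `φr`
is strictly increasing this is equivalent to `τ*` maximizing `τ ↦ ∑_θ μ_θ φr(u_r(σ_θ, τ))`. -/
def AmbObedient {Ω A Θ : Type*} [Fintype Ω] [Fintype A] [DecidableEq A] [Fintype Θ]
    (φr : ℝ → ℝ) (p : Ω → ℝ) (ur : A → Ω → ℝ) (σ : Θ → Ω → A → ℝ) (μ : Θ → ℝ) : Prop :=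
  ∀ τ : A → A → ℝ, IsKernel τ →
    ∑ θ, μ θ * φr (expPayoff p ur (σ θ) τ) ≤ ∑ θ, μ θ * φr (expPayoff p ur (σ θ) tauStar)

/-- A smooth ambiguity index: strictly increasing, concave, differentiable. -/
def SmoothIndex (φ : ℝ → ℝ) : Prop :=
  StrictMono φ ∧ ConcaveOn ℝ Set.univ φ ∧ Differentiable ℝ φ

/-- Two experiments are (strictly) Pareto ranked: under obedience, sender and receiver
strictly rank them the same way. -/
def ParetoRanked {Ω A : Type*} [Fintype Ω] [Fintype A] [DecidableEq A]
    (p : Ω → ℝ) (us ur : A → Ω → ℝ) (σ σ' : Ω → A → ℝ) : Prop :=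
  (expPayoff p us σ' tauStar < expPayoff p us σ tauStar ∧
      expPayoff p ur σ' tauStar < expPayoff p ur σ tauStar) ∨
  (expPayoff p us σ tauStar < expPayoff p us σ' tauStar ∧
      expPayoff p ur σ tauStar < expPayoff p ur σ' tauStar)

/-- Two experiments are weakly Pareto ranked. -/
def WeaklyParetoRanked {Ω A : Type*} [Fintype Ω] [Fintype A] [DecidableEq A]
    (p : Ω → ℝ) (us ur : A → Ω → ℝ) (σ σ' : Ω → A → ℝ) : Prop :=
  (expPayoff p us σ' tauStar ≤ expPayoff p us σ tauStar ∧
      expPayoff p ur σ' tauStar ≤ expPayoff p ur σ tauStar) ∨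
  (expPayoff p us σ tauStar ≤ expPayoff p us σ' tauStar ∧
      expPayoff p ur σ tauStar ≤ expPayoff p ur σ' tauStar)

/-- Pointwise convex combination of two experiments. -/
noncomputable def mixExp {Ω A : Type*} (lam : ℝ) (σ1 σ2 : Ω → A → ℝ) : Ω → A → ℝ :=
  fun ω a => lam * σ1 ω a + (1 - lam) * σ2 ω a

/-- `(σbar, σlo, lam)` is a Pareto-ranked splitting of the experiment `σ`. -/
def ParetoRankedSplitting {Ω A : Type*} [Fintype Ω] [Fintype A] [DecidableEq A]
    (p : Ω → ℝ) (us ur : A → Ω → ℝ) (σbar σlo : Ω → A → ℝ) (lam : ℝ) (σ : Ω → A → ℝ) : Prop :=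
  IsKernel σbar ∧ IsKernel σlo ∧ lam ∈ Set.Ioo (0 : ℝ) 1 ∧
    mixExp lam σbar σlo = σ ∧ ParetoRanked p us ur σbar σlo

/-- The `((σbar, σlo), lam)`-probability premium of a player with utility `u` and index `φ`. -/
noncomputable def probPremium {Ω A : Type*} [Fintype Ω] [Fintype A] [DecidableEq A]
    (p : Ω → ℝ) (u : A → Ω → ℝ) (φ : ℝ → ℝ) (σbar σlo : Ω → A → ℝ) (lam : ℝ) : ℝ :=
  (φ (expPayoff p u (mixExp lam σbar σlo) tauStar) -
      lam * φ (expPayoff p u σbar tauStar) - (1 - lam) * φ (expPayoff p u σlo tauStar)) /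
    (φ (expPayoff p u σbar tauStar) - φ (expPayoff p u σlo tauStar))

/-- The set of `φs`-transformed sender values attainable by obedient ambiguous experiments;
the value of the sender's problem `(P)` equals `u` iff `φs u` is the least upper bound of
this set (since `φs` is continuous and strictly increasing). -/
def senderValues {Ω A : Type*} [Fintype Ω] [Fintype A] [DecidableEq A]
    (φs φr : ℝ → ℝ) (p : Ω → ℝ) (us ur : A → Ω → ℝ) : Set ℝ :=
  {x | ∃ (n : ℕ) (σ : Fin n → Ω → A → ℝ) (μ : Fin n → ℝ),
    (∀ j, IsKernel (σ j)) ∧ IsProb μ ∧ AmbObedient φr p ur σ μ ∧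
    x = ∑ j, μ j * φs (expPayoff p us (σ j) tauStar)}

/-- The set of feasible values of the auxiliary program `(Φ*(u))`: sums
`∑_θ λ_θ Φ_u(σ_θ)` over splittings `(λ_θ, σ_θ)` of obedient experiments, where
`Φ_u(σ) = (φs(u_s(σ,τ*)) − φs(u)) / φr'(u_r(σ,τ*))`. -/
def phiProgram {Ω A : Type*} [Fintype Ω] [Fintype A] [DecidableEq A]
    (φs φr : ℝ → ℝ) (p : Ω → ℝ) (us ur : A → Ω → ℝ) (u : ℝ) : Set ℝ :=
  {x | ∃ (n : ℕ) (σ : Fin n → Ω → A → ℝ) (lam : Fin n → ℝ),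
    (∀ j, IsKernel (σ j)) ∧ IsProb lam ∧
    Obedient p ur (fun ω a => ∑ j, lam j * σ j ω a) ∧
    x = ∑ j, lam j * ((φs (expPayoff p us (σ j) tauStar) - φs u) /
      deriv φr (expPayoff p ur (σ j) tauStar))}

section Helpers

lemma isKernel_tauStar {A : Type*} [Fintype A] [DecidableEq A] : IsKernel (tauStar (A := A)) := by
  constructor
  · intro m a; unfold tauStar; split <;> norm_num
  · intro m; simp [tauStar]

lemma expPayoff_mix_tau {Ω M A : Type*} [Fintype Ω] [Fintype M] [Fintype A]
    (p : Ω → ℝ) (u : A → Ω → ℝ) (σ : Ω → M → ℝ) (τ1 τ2 : M → A → ℝ) (s : ℝ) :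
    expPayoff p u σ (fun m a => (1 - s) * τ1 m a + s * τ2 m a)
      = (1 - s) * expPayoff p u σ τ1 + s * expPayoff p u σ τ2 := by
  simp only [expPayoff, Finset.mul_sum, ← Finset.sum_add_distrib]
  refine Finset.sum_congr rfl fun ω _ => Finset.sum_congr rfl fun m _ =>
    Finset.sum_congr rfl fun a _ => ?_
  ring

lemma expPayoff_mixExp {Ω M A : Type*} [Fintype Ω] [Fintype M] [Fintype A]
    (p : Ω → ℝ) (u : A → Ω → ℝ) (σ1 σ2 : Ω → M → ℝ) (τ : M → A → ℝ) (t : ℝ) :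
    expPayoff p u (mixExp t σ1 σ2) τ
      = t * expPayoff p u σ1 τ + (1 - t) * expPayoff p u σ2 τ := by
  simp only [expPayoff, mixExp, Finset.mul_sum, ← Finset.sum_add_distrib]
  refine Finset.sum_congr rfl fun ω _ => Finset.sum_congr rfl fun m _ =>
    Finset.sum_congr rfl fun a _ => ?_
  ring

lemma isKernel_mix_tau {M A : Type*} [Fintype A] {τ1 τ2 : M → A → ℝ}
    (h1 : IsKernel τ1) (h2 : IsKernel τ2) {s : ℝ} (hs0 : 0 ≤ s) (hs1 : s ≤ 1) :
    IsKernel (fun m a => (1 - s) * τ1 m a + s * τ2 m a) := by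
  constructor
  · intro m a
    have := h1.1 m a; have := h2.1 m a
    have : (0:ℝ) ≤ 1 - s := by linarith
    positivity
  · intro m
    simp only [Finset.sum_add_distrib, ← Finset.mul_sum, h1.2 m, h2.2 m]
    ring

lemma isKernel_mixExp {Ω A : Type*} [Fintype A] {σ1 σ2 : Ω → A → ℝ}
    (h1 : IsKernel σ1) (h2 : IsKernel σ2) {t : ℝ} (ht0 : 0 ≤ t) (ht1 : t ≤ 1) :
    IsKernel (mixExp t σ1 σ2) := by
  constructor
  · intro ω a
    have := h1.1 ω a; have := h2.1 ω a
    have : (0:ℝ) ≤ 1 - t := by linarith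
    unfold mixExp; positivity
  · intro ω
    simp only [mixExp, Finset.sum_add_distrib, ← Finset.mul_sum, h1.2 ω, h2.2 ω]
    ring

lemma tangent_le {φ : ℝ → ℝ} (hc : ConcaveOn ℝ Set.univ φ) (hd : Differentiable ℝ φ)
    (x y : ℝ) : φ y ≤ φ x + deriv φ x * (y - x) := by
  rcases lt_trichotomy x y with h | h | h
  · have hs := hc.slope_le_deriv (Set.mem_univ x) (Set.mem_univ y) h (hd x)
    rw [slope_def_field] at hs
    have hxy : (0:ℝ) < y - x := by linarith
    rw [div_le_iff₀ hxy] at hs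
    · linarith [hs]
  · simp [h]
  · have hs := hc.deriv_le_slope (Set.mem_univ y) (Set.mem_univ x) h (hd x)
    rw [slope_def_field] at hs
    have hxy : (0:ℝ) < x - y := by linarith
    rw [le_div_iff₀ hxy] at hs
    nlinarith [hs]

lemma deriv_pos_of_strictMono {φ : ℝ → ℝ} (hm : StrictMono φ)
    (hc : ConcaveOn ℝ Set.univ φ) (hd : Differentiable ℝ φ) (x : ℝ) : 0 < deriv φ x := by
  have hs := hc.slope_le_deriv (Set.mem_univ x) (Set.mem_univ (x + 1)) (by linarith)
    (hd x)
  rw [slope_def_field] at hs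
  have : 0 < φ (x + 1) - φ x := by have := hm (show x < x + 1 by linarith); linarith
  calc (0:ℝ) < (φ (x+1) - φ x) / (x + 1 - x) := by
        apply div_pos this; norm_num
    _ ≤ deriv φ x := hs

lemma deriv_strict_anti {φ : ℝ → ℝ} (hc : StrictConcaveOn ℝ Set.univ φ)
    (hd : Differentiable ℝ φ) {x y : ℝ} (h : x < y) : deriv φ y < deriv φ x :=
  hc.strictAntiOn_deriv (fun z _ => (hd z)) (Set.mem_univ x) (Set.mem_univ y) h

lemma sum_split {Θ : Type*} [Fintype Θ] [DecidableEq Θ] (f : Θ → ℝ) {θ θ' : Θ} (h : θ ≠ θ') :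
    ∑ j, f j = f θ + f θ' + ∑ j ∈ (Finset.univ.erase θ).erase θ', f j := by
  rw [← Finset.sum_erase_add _ _ (Finset.mem_univ θ),
    ← Finset.sum_erase_add _ _ (Finset.mem_erase.mpr ⟨h.symm, Finset.mem_univ θ'⟩)]
  ring
/-- First-order condition at `τ*` for an obedient ambiguous experiment. -/
lemma foc {Ω A Θ : Type*} [Fintype Ω] [Fintype A] [DecidableEq A] [Fintype Θ]
    {φr : ℝ → ℝ} (hdφ : Differentiable ℝ φr)
    {p : Ω → ℝ} {ur : A → Ω → ℝ} {σ : Θ → Ω → A → ℝ} {μ : Θ → ℝ}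
    (hobed : AmbObedient φr p ur σ μ) (τ : A → A → ℝ) (hτ : IsKernel τ) :
    ∑ θ, μ θ * (deriv φr (expPayoff p ur (σ θ) tauStar) *
      (expPayoff p ur (σ θ) τ - expPayoff p ur (σ θ) tauStar)) ≤ 0 := by
  set v : Θ → ℝ := fun θ => expPayoff p ur (σ θ) tauStar with hv
  set d : Θ → ℝ := fun θ => expPayoff p ur (σ θ) τ - v θ with hd
  set g : ℝ → ℝ := fun s => ∑ θ, μ θ * φr (v θ + s * d θ) with hg
  have hgle : ∀ s ∈ Set.Icc (0:ℝ) 1, g s ≤ g 0 := by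
    intro s hs
    have hker : IsKernel (fun m a => (1 - s) * tauStar m a + s * τ m a) :=
      isKernel_mix_tau isKernel_tauStar hτ hs.1 hs.2
    have h := hobed _ hker
    have heq : ∀ θ, expPayoff p ur (σ θ) (fun m a => (1 - s) * tauStar m a + s * τ m a)
        = v θ + s * d θ := by
      intro θ
      rw [expPayoff_mix_tau]
      simp only [hv, hd]; ring
    calc g s = ∑ θ, μ θ * φr (expPayoff p ur (σ θ)
          (fun m a => (1 - s) * tauStar m a + s * τ m a)) := by
          refine Finset.sum_congr rfl fun θ _ => by rw [heq θ]
      _ ≤ ∑ θ, μ θ * φr (expPayoff p ur (σ θ) tauStar) := h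
      _ = g 0 := by simp [hg]; rfl
  have hD : HasDerivAt g (∑ θ, μ θ * (deriv φr (v θ) * d θ)) 0 := by
    apply HasDerivAt.fun_sum
    intro θ _
    have h1 : HasDerivAt (fun s : ℝ => v θ + s * d θ) (d θ) 0 := by
      simpa using ((hasDerivAt_id (0:ℝ)).mul_const (d θ)).const_add (v θ)
    have h2 : HasDerivAt φr (deriv φr (v θ + 0 * d θ)) (v θ + 0 * d θ) := (hdφ _).hasDerivAt
    have := (h2.comp 0 h1).const_mul (μ θ)
    simpa using this
  by_contra hcon
  push_neg at hcon
  have hcon' : 0 < ∑ θ, μ θ * (deriv φr (v θ) * d θ) := hcon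
  have H := hasDerivAt_iff_tendsto_slope.mp hD
  have H2 : ∀ᶠ s in nhdsWithin 0 {(0:ℝ)}ᶜ, 0 < slope g 0 s := H.eventually (lt_mem_nhds hcon')
  have H3 : ∀ᶠ s in nhdsWithin 0 (Set.Ioi (0:ℝ)), 0 < slope g 0 s :=
    H2.filter_mono (nhdsWithin_mono 0 (fun x hx => by
      simp only [Set.mem_compl_iff, Set.mem_singleton_iff]
      exact ne_of_gt hx))
  have H4 : ∀ᶠ s in nhdsWithin 0 (Set.Ioi (0:ℝ)), s ∈ Set.Ioo (0:ℝ) 1 :=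
    Ioo_mem_nhdsGT_of_mem ⟨le_refl 0, one_pos⟩
  obtain ⟨s, hslope, hs⟩ := (H3.and H4).exists
  have hle := hgle s ⟨le_of_lt hs.1, le_of_lt hs.2⟩
  rw [slope_def_field] at hslope
  rw [sub_zero] at hslope
  have : 0 < g s - g 0 := by
    rcases div_pos_iff.mp hslope with ⟨h1, _⟩ | ⟨_, h2⟩
    · exact h1
    · linarith [hs.1]
  linarith

end Helpers

set_option maxHeartbeats 2000000 in
/-- Theorem 1 (i): at a solution `(σ, μ)` of the sender's problem `(P)`,
with `φr` strictly concave, any two experiments in the support of `μ` whose sender payoffs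
bracket `U_s(σ, μ, τ*)` (with at least one strict inequality) are weakly Pareto-ranked.
Here `Us` denotes `U_s(σ, μ, τ*)`, i.e. `φs Us = ∑_θ μ_θ φs(u_s(σ_θ, τ*))`. -/
theorem weak_pareto_ranking_at_optimum
    {Ω A Θ : Type*} [Fintype Ω] [Fintype A] [DecidableEq A] [Fintype Θ]
    (p : Ω → ℝ) (hp : IsProb p) (us ur : A → Ω → ℝ)
    (φs φr : ℝ → ℝ) (hφs : SmoothIndex φs) (hφr : SmoothIndex φr)
    (hφrstrict : StrictConcaveOn ℝ Set.univ φr)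
    (σ : Θ → Ω → A → ℝ) (hσ : ∀ θ, IsKernel (σ θ)) (μ : Θ → ℝ) (hμ : IsProb μ)
    (hobed : AmbObedient φr p ur σ μ)
    (hopt : ∀ (n : ℕ) (σ' : Fin n → Ω → A → ℝ) (μ' : Fin n → ℝ),
      (∀ j, IsKernel (σ' j)) → IsProb μ' → AmbObedient φr p ur σ' μ' →
      ∑ j, μ' j * φs (expPayoff p us (σ' j) tauStar) ≤
        ∑ θ, μ θ * φs (expPayoff p us (σ θ) tauStar))
    (Us : ℝ) (hUs : φs Us = ∑ θ, μ θ * φs (expPayoff p us (σ θ) tauStar)) :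
    ∀ θ θ', μ θ ≠ 0 → μ θ' ≠ 0 →
      Us ≤ expPayoff p us (σ θ) tauStar →
      expPayoff p us (σ θ') tauStar ≤ Us →
      (Us < expPayoff p us (σ θ) tauStar ∨ expPayoff p us (σ θ') tauStar < Us) →
      WeaklyParetoRanked p us ur (σ θ) (σ θ') := by
  classical
  intro θ θ' hθ0 hθ'0 hUsa hbUs hstrict
  by_cases hEqc : θ = θ'
  · subst hEqc; left; exact ⟨le_refl _, le_refl _⟩
  have hEq : θ ≠ θ' := hEqc
  left
  refine ⟨le_trans hbUs hUsa, ?_⟩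
  by_contra hxy
  push_neg at hxy
  -- opaque names for the four payoffs
  obtain ⟨a, ha⟩ : ∃ v, v = expPayoff p us (σ θ) tauStar := ⟨_, rfl⟩
  obtain ⟨b, hb⟩ : ∃ v, v = expPayoff p us (σ θ') tauStar := ⟨_, rfl⟩
  obtain ⟨x, hx⟩ : ∃ v, v = expPayoff p ur (σ θ) tauStar := ⟨_, rfl⟩
  obtain ⟨y, hy⟩ : ∃ v, v = expPayoff p ur (σ θ') tauStar := ⟨_, rfl⟩
  rw [← ha] at hUsa
  rw [← hb] at hbUs
  rw [← ha, ← hb] at hstrict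
  rw [← hx, ← hy] at hxy
  -- hxy : x < y
  have hμθ : 0 < μ θ := lt_of_le_of_ne (hμ.1 θ) (Ne.symm hθ0)
  have hμθ' : 0 < μ θ' := lt_of_le_of_ne (hμ.1 θ') (Ne.symm hθ'0)
  obtain ⟨P, hP⟩ : ∃ v, v = deriv φr x := ⟨_, rfl⟩
  obtain ⟨Q, hQ⟩ : ∃ v, v = deriv φr y := ⟨_, rfl⟩
  have hPpos : 0 < P := by rw [hP]; exact deriv_pos_of_strictMono hφr.1 hφr.2.1 hφr.2.2 x
  have hQpos : 0 < Q := by rw [hQ]; exact deriv_pos_of_strictMono hφr.1 hφr.2.1 hφr.2.2 y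
  obtain ⟨t, ht⟩ : ∃ v, v = μ θ * P / (2 * (μ θ * P + μ θ' * Q)) := ⟨_, rfl⟩
  have hSpos : 0 < μ θ * P + μ θ' * Q := by positivity
  have ht0 : 0 < t := by rw [ht]; positivity
  have ht12 : t ≤ 1 / 2 := by
    rw [ht, div_le_iff₀ (by positivity)]
    linarith only [mul_pos hμθ' hQpos]
  have ht1 : t < 1 := by linarith
  have h1t : 0 < 1 - t := by linarith
  obtain ⟨m, hm⟩ : ∃ v, v = t * x + (1 - t) * y := ⟨_, rfl⟩
  have hxm : x < m := by
    rw [hm]; linarith only [mul_pos h1t (sub_pos.mpr hxy)]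
  have hmy : m < y := by
    rw [hm]; linarith only [mul_pos ht0 (sub_pos.mpr hxy)]
  obtain ⟨R, hR⟩ : ∃ v, v = deriv φr m := ⟨_, rfl⟩
  have hRpos : 0 < R := by rw [hR]; exact deriv_pos_of_strictMono hφr.1 hφr.2.1 hφr.2.2 m
  have hPR : R < P := by rw [hR, hP]; exact deriv_strict_anti hφrstrict hφr.2.2 hxm
  have hRQ : Q < R := by rw [hR, hQ]; exact deriv_strict_anti hφrstrict hφr.2.2 hmy
  obtain ⟨α, hα⟩ : ∃ v, v = μ θ' * Q / ((1 - t) * R) := ⟨_, rfl⟩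
  obtain ⟨β, hβ⟩ : ∃ v, v = μ θ' * t * Q / ((1 - t) * P) := ⟨_, rfl⟩
  have hαpos : 0 < α := by rw [hα]; positivity
  have hβpos : 0 < β := by rw [hβ]; positivity
  have hβμ : β ≤ μ θ := by
    rw [hβ, div_le_iff₀ (by positivity)]
    have h2tS : t * (2 * (μ θ * P + μ θ' * Q)) = μ θ * P := by rw [ht]; field_simp
    linarith only [h2tS, mul_pos hμθ hPpos]
  set rest := (Finset.univ.erase θ).erase θ' with hrest
  have hrest_mem : ∀ j ∈ rest, j ≠ θ' ∧ j ≠ θ := by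
    intro j hj
    rw [hrest, Finset.mem_erase, Finset.mem_erase] at hj
    exact ⟨hj.1, hj.2.1⟩
  have hrest_nonneg : 0 ≤ ∑ j ∈ rest, μ j := Finset.sum_nonneg fun j _ => hμ.1 j
  obtain ⟨B, hB⟩ : ∃ v, v = (∑ j ∈ rest, μ j) + (μ θ - β) + α := ⟨_, rfl⟩
  have hBpos : 0 < B := by
    rw [hB]
    have : (0:ℝ) ≤ μ θ - β := by linarith
    linarith
  have hBne : B ≠ 0 := ne_of_gt hBpos
  have hμsum : μ θ + μ θ' + ∑ j ∈ rest, μ j = 1 := by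
    have h := sum_split μ hEq
    rw [← hrest] at h
    rw [← h]; exact hμ.2
  -- the perturbed ambiguous experiment
  obtain ⟨σ2, hσ2⟩ : ∃ v, v = fun j => if j = θ' then mixExp t (σ θ) (σ θ') else σ j :=
    ⟨_, rfl⟩
  obtain ⟨μ2, hμ2⟩ : ∃ v : Θ → ℝ,
      v = fun j => (if j = θ then μ θ - β else if j = θ' then α else μ j) / B := ⟨_, rfl⟩
  have hμ2θ : μ2 θ = (μ θ - β) / B := by rw [hμ2]; simp
  have hμ2θ' : μ2 θ' = α / B := by rw [hμ2]; simp [Ne.symm hEq]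
  have hμ2rest : ∀ j ∈ rest, μ2 j = μ j / B := by
    intro j hj
    obtain ⟨h1, h2⟩ := hrest_mem j hj
    rw [hμ2]; simp [h1, h2]
  have hσ2θ : σ2 θ = σ θ := by rw [hσ2]; simp [hEq]
  have hσ2θ' : σ2 θ' = mixExp t (σ θ) (σ θ') := by rw [hσ2]; simp
  have hσ2rest : ∀ j ∈ rest, σ2 j = σ j := by
    intro j hj
    obtain ⟨h1, _⟩ := hrest_mem j hj
    rw [hσ2]; simp [h1]
  have hker2 : ∀ j, IsKernel (σ2 j) := by
    intro j
    rw [hσ2]; dsimp only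
    split
    · exact isKernel_mixExp (hσ θ) (hσ θ') (le_of_lt ht0) (le_of_lt ht1)
    · exact hσ j
  have hprob2 : IsProb μ2 := by
    constructor
    · intro j
      rw [hμ2]; dsimp only
      apply div_nonneg _ (le_of_lt hBpos)
      split
      · linarith
      split
      · linarith
      · exact hμ.1 j
    · have h := sum_split μ2 hEq
      rw [← hrest] at h
      rw [h, hμ2θ, hμ2θ']
      have h2 : ∑ j ∈ rest, μ2 j = (∑ j ∈ rest, μ j) / B := by
        rw [Finset.sum_div]
        exact Finset.sum_congr rfl fun j hj => hμ2rest j hj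
      rw [h2, ← add_div, ← add_div, div_eq_one_iff_eq hBne, hB]
      ring
  -- payoff identities for the perturbed family
  have hw2τ : ∀ τ : A → A → ℝ, expPayoff p ur (σ2 θ') τ
      = t * expPayoff p ur (σ θ) τ + (1 - t) * expPayoff p ur (σ θ') τ := by
    intro τ; rw [hσ2θ', expPayoff_mixExp]
  have hw2star : expPayoff p ur (σ2 θ') tauStar = m := by
    rw [hw2τ, hm, ← hx, ← hy]
  -- obedience of the perturbed experiment
  have hobed2 : AmbObedient φr p ur σ2 μ2 := by
    intro τ hτ
    have hfoc := foc hφr.2.2 hobed τ hτ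
    have htan : ∀ j, μ2 j * φr (expPayoff p ur (σ2 j) τ) ≤
        μ2 j * (φr (expPayoff p ur (σ2 j) tauStar) +
          deriv φr (expPayoff p ur (σ2 j) tauStar) *
            (expPayoff p ur (σ2 j) τ - expPayoff p ur (σ2 j) tauStar)) := fun j =>
      mul_le_mul_of_nonneg_left (tangent_le hφr.2.1 hφr.2.2 _ _) (hprob2.1 j)
    have key : ∑ j, μ2 j * (deriv φr (expPayoff p ur (σ2 j) tauStar) *
          (expPayoff p ur (σ2 j) τ - expPayoff p ur (σ2 j) tauStar))
        = (1 / B) * ∑ j, μ j * (deriv φr (expPayoff p ur (σ j) tauStar) *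
          (expPayoff p ur (σ j) τ - expPayoff p ur (σ j) tauStar)) := by
      have hL := sum_split (fun j => μ2 j * (deriv φr (expPayoff p ur (σ2 j) tauStar) *
        (expPayoff p ur (σ2 j) τ - expPayoff p ur (σ2 j) tauStar))) hEq
      have hRs := sum_split (fun j => μ j * (deriv φr (expPayoff p ur (σ j) tauStar) *
        (expPayoff p ur (σ j) τ - expPayoff p ur (σ j) tauStar))) hEq
      rw [← hrest] at hL hRs
      beta_reduce at hL hRs
      rw [hL, hRs]
      have hrestEq : ∑ j ∈ rest, μ2 j * (deriv φr (expPayoff p ur (σ2 j) tauStar) *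
          (expPayoff p ur (σ2 j) τ - expPayoff p ur (σ2 j) tauStar))
          = (1 / B) * ∑ j ∈ rest, μ j * (deriv φr (expPayoff p ur (σ j) tauStar) *
          (expPayoff p ur (σ j) τ - expPayoff p ur (σ j) tauStar)) := by
        rw [Finset.mul_sum]
        refine Finset.sum_congr rfl fun j hj => ?_
        rw [hσ2rest j hj, hμ2rest j hj]; ring
      rw [hrestEq, hμ2θ, hμ2θ', hσ2θ, hw2star, hw2τ τ, ← hx, ← hy, ← hP, ← hQ, ← hR,
        hm, hα, hβ]
      have hRne : R ≠ 0 := ne_of_gt hRpos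
      have hPne : P ≠ 0 := ne_of_gt hPpos
      have h1tne : (1:ℝ) - t ≠ 0 := ne_of_gt h1t
      field_simp
      ring
    calc ∑ j, μ2 j * φr (expPayoff p ur (σ2 j) τ)
        ≤ ∑ j, μ2 j * (φr (expPayoff p ur (σ2 j) tauStar) +
            deriv φr (expPayoff p ur (σ2 j) tauStar) *
              (expPayoff p ur (σ2 j) τ - expPayoff p ur (σ2 j) tauStar)) :=
          Finset.sum_le_sum fun j _ => htan j
      _ = (∑ j, μ2 j * φr (expPayoff p ur (σ2 j) tauStar)) +
            ∑ j, μ2 j * (deriv φr (expPayoff p ur (σ2 j) tauStar) *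
              (expPayoff p ur (σ2 j) τ - expPayoff p ur (σ2 j) tauStar)) := by
          rw [← Finset.sum_add_distrib]
          exact Finset.sum_congr rfl fun j _ => by ring
      _ ≤ ∑ j, μ2 j * φr (expPayoff p ur (σ2 j) tauStar) := by
          have h2 : ∑ j, μ2 j * (deriv φr (expPayoff p ur (σ2 j) tauStar) *
              (expPayoff p ur (σ2 j) τ - expPayoff p ur (σ2 j) tauStar)) ≤ 0 := by
            rw [key]
            exact mul_nonpos_of_nonneg_of_nonpos (by positivity) hfoc
          linarith only [h2]
  -- sender's strict improvement
  have hbt : expPayoff p us (σ2 θ') tauStar = t * a + (1 - t) * b := by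
    rw [hσ2θ', expPayoff_mixExp, ← ha, ← hb]
  have hsender : φs Us < ∑ j, μ2 j * φs (expPayoff p us (σ2 j) tauStar) := by
    have hLs := sum_split (fun j => μ2 j * φs (expPayoff p us (σ2 j) tauStar)) hEq
    have hRs2 := sum_split (fun j => μ j * φs (expPayoff p us (σ j) tauStar)) hEq
    rw [← hrest] at hLs hRs2
    beta_reduce at hLs hRs2
    have hrestEqS : ∑ j ∈ rest, μ2 j * φs (expPayoff p us (σ2 j) tauStar)
        = (1 / B) * ∑ j ∈ rest, μ j * φs (expPayoff p us (σ j) tauStar) := by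
      rw [Finset.mul_sum]
      refine Finset.sum_congr rfl fun j hj => ?_
      rw [hσ2rest j hj, hμ2rest j hj]; ring
    have hrestS : ∑ j ∈ rest, μ j * φs (expPayoff p us (σ j) tauStar)
        = φs Us - μ θ * φs a - μ θ' * φs b := by
      rw [hUs, hRs2, ← ha, ← hb]; ring
    have hchord : t * φs a + (1 - t) * φs b ≤ φs (t * a + (1 - t) * b) := by
      have h := hφs.2.1.2 (Set.mem_univ a) (Set.mem_univ b)
        (le_of_lt ht0) (le_of_lt h1t) (by ring)
      simpa [smul_eq_mul] using h
    have hFa : 0 ≤ φs a - φs Us := sub_nonneg.mpr (hφs.1.monotone hUsa)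
    have hFb : φs b - φs Us ≤ 0 := sub_nonpos.mpr (hφs.1.monotone hbUs)
    have hc1 : β < α * t := by
      have e1 : α * t = μ θ' * t * Q / ((1 - t) * R) := by rw [hα]; ring
      rw [hβ, e1]
      apply div_lt_div_of_pos_left (by positivity) (by positivity)
      linarith only [mul_pos h1t (sub_pos.mpr hPR)]
    have hc2 : α * (1 - t) < μ θ' := by
      have e1 : α * (1 - t) = μ θ' * Q / R := by
        rw [hα]
        field_simp
      rw [e1, div_lt_iff₀ hRpos]
      linarith only [mul_pos hμθ' (sub_pos.mpr hRQ)]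
    have hkey : 0 < α * (φs (t * a + (1 - t) * b) - φs Us)
        - β * (φs a - φs Us) - μ θ' * (φs b - φs Us) := by
      have h1 : α * (t * (φs a - φs Us) + (1 - t) * (φs b - φs Us))
          ≤ α * (φs (t * a + (1 - t) * b) - φs Us) := by
        apply mul_le_mul_of_nonneg_left _ (le_of_lt hαpos)
        linarith
      rcases hstrict with hst | hst
      · have hFa' : 0 < φs a - φs Us := sub_pos.mpr (hφs.1 hst)
        linarith only [h1, mul_nonneg (neg_nonneg.mpr hFb) (le_of_lt (sub_pos.mpr hc2)),
          mul_pos hFa' (sub_pos.mpr hc1)]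
      · have hFb' : φs b - φs Us < 0 := sub_neg.mpr (hφs.1 hst)
        linarith only [h1, mul_pos (neg_pos.mpr hFb') (sub_pos.mpr hc2),
          mul_nonneg hFa (le_of_lt (sub_pos.mpr hc1))]
    have hBval : B = 1 - μ θ' - β + α := by rw [hB]; linarith
    rw [hLs, hμ2θ, hμ2θ', hσ2θ, hbt, hrestEqS, hrestS, ← ha]
    have hcombine : (μ θ - β) / B * φs a + α / B * φs (t * a + (1 - t) * b)
        + (1 / B) * (φs Us - μ θ * φs a - μ θ' * φs b)
        = ((μ θ - β) * φs a + α * φs (t * a + (1 - t) * b)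
          + (φs Us - μ θ * φs a - μ θ' * φs b)) / B := by
      field_simp
    rw [hcombine, lt_div_iff₀ hBpos]
    have hBmul : φs Us * B = φs Us * (1 - μ θ' - β + α) := by rw [hBval]
    linarith only [hkey, hBmul]
  -- contradiction with optimality
  obtain ⟨e, he⟩ : ∃ v, v = (Fintype.equivFin Θ).symm := ⟨_, rfl⟩
  have hprobFin : IsProb (fun j => μ2 (e j)) := by
    constructor
    · intro j; exact hprob2.1 (e j)
    · rw [Equiv.sum_comp e μ2]; exact hprob2.2
  have hobedFin : AmbObedient φr p ur (fun j => σ2 (e j)) (fun j => μ2 (e j)) := by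
    intro τ hτ
    have h := hobed2 τ hτ
    calc ∑ j, μ2 (e j) * φr (expPayoff p ur (σ2 (e j)) τ)
        = ∑ j, μ2 j * φr (expPayoff p ur (σ2 j) τ) :=
          Equiv.sum_comp e (fun j => μ2 j * φr (expPayoff p ur (σ2 j) τ))
      _ ≤ ∑ j, μ2 j * φr (expPayoff p ur (σ2 j) tauStar) := h
      _ = ∑ j, μ2 (e j) * φr (expPayoff p ur (σ2 (e j)) tauStar) :=
          (Equiv.sum_comp e (fun j => μ2 j * φr (expPayoff p ur (σ2 j) tauStar))).symm
  have hfin := hopt (Fintype.card Θ) (fun j => σ2 (e j)) (fun j => μ2 (e j))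
    (fun j => hker2 (e j)) hprobFin hobedFin
  rw [Equiv.sum_comp e (fun j => μ2 j * φs (expPayoff p us (σ2 j) tauStar)),
    ← hUs] at hfin
  linarith only [hfin, hsender]
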